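/- arXiv:2403.02608 — 4 statements merged into one kernel-verified Lean document; each statement's English description precedes it below -/
import Mathlib

section
/- If Γ ∈ S^t and Ω ∈ S^s are symmetric matrices whose Kronecker sum Ω ⊕ Γ is positive definite, then with c = (λ_min(Γ) − λ_min(Ω))/2, both Γ − c·I_t and Ω + c·I_s are positive definite. -/
open Matrix
open scoped Kronecker RealInnerProductSpace

/-- Kronecker product acting on a product-form vector. -/
lemma kron_mulVec_prod {m n : Type*} [Fintype m] [Fintype n]
    (A : Matrix m m ℝ) (B : Matrix n n ℝ) (u : m → ℝ) (v : n → ℝ) :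
    (A ⊗ₖ B) *ᵥ (fun p => u p.1 * v p.2) = fun p => (A *ᵥ u) p.1 * (B *ᵥ v) p.2 := by
  funext p
  simp only [mulVec, dotProduct, Fintype.sum_prod_type, kroneckerMap_apply]
  rw [Finset.sum_mul_sum]
  exact Finset.sum_congr rfl fun k _ => Finset.sum_congr rfl fun l _ => by ring

lemma real_symm_dot_mulVec {n : Type*} [Fintype n]
    {A : Matrix n n ℝ} (hA : A.IsHermitian) (v w : n → ℝ) :
    v ⬝ᵥ (A *ᵥ w) = (A *ᵥ v) ⬝ᵥ w := by
  rw [dotProduct_mulVec, ← mulVec_transpose]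
  have hT : Aᵀ = A := by
    ext i j
    simpa [conjTranspose_apply] using (congrFun (congrFun hA.eq j) i).symm
  rw [hT]

lemma rayleigh_lower {n : Type*} [Fintype n] [DecidableEq n]
    {A : Matrix n n ℝ} (hA : A.IsHermitian) (μ : ℝ)
    (hμ : ∀ i, μ ≤ hA.eigenvalues i) (x : n → ℝ) :
    μ * (x ⬝ᵥ x) ≤ x ⬝ᵥ (A *ᵥ x) := by
  classical
  set b := hA.eigenvectorBasis with hb
  set X : EuclideanSpace ℝ n := (WithLp.equiv 2 (n → ℝ)).symm x with hX
  set Y : EuclideanSpace ℝ n := (WithLp.equiv 2 (n → ℝ)).symm (A *ᵥ x) with hY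
  have hrepr : ∀ (u v : EuclideanSpace ℝ n), ⟪u, v⟫ = ∑ i, b.repr u i * b.repr v i := by
    intro u v
    rw [← b.repr.inner_map_map u v, PiLp.inner_apply]
    simp only [RCLike.inner_apply, conj_trivial]
    exact Finset.sum_congr rfl fun _ _ => mul_comm _ _
  have hreprY : ∀ i, b.repr Y i = hA.eigenvalues i * b.repr X i := by
    intro i
    have h2 : ⟪(b i : EuclideanSpace ℝ n), Y⟫ = (⇑(b i)) ⬝ᵥ (A *ᵥ x) := by
      rw [PiLp.inner_apply]
      simp only [RCLike.inner_apply, conj_trivial]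
      rw [dotProduct]; exact Finset.sum_congr rfl fun _ _ => mul_comm _ _
    have h3 : ⟪(b i : EuclideanSpace ℝ n), X⟫ = (⇑(b i)) ⬝ᵥ x := by
      rw [PiLp.inner_apply]
      simp only [RCLike.inner_apply, conj_trivial]
      rw [dotProduct]; exact Finset.sum_congr rfl fun _ _ => mul_comm _ _
    rw [b.repr_apply_apply, b.repr_apply_apply, h2, h3, real_symm_dot_mulVec hA, hb,
      hA.mulVec_eigenvectorBasis, smul_dotProduct, smul_eq_mul]
  have hXY : x ⬝ᵥ (A *ᵥ x) = ⟪X, Y⟫ := by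
    rw [PiLp.inner_apply]
    simp only [RCLike.inner_apply, conj_trivial]
    rw [dotProduct]; exact Finset.sum_congr rfl fun _ _ => mul_comm _ _
  have hXX : x ⬝ᵥ x = ⟪X, X⟫ := by
    rw [PiLp.inner_apply]
    simp only [RCLike.inner_apply, conj_trivial]
    rfl
  have hxAx : x ⬝ᵥ (A *ᵥ x) = ∑ i, hA.eigenvalues i * (b.repr X i)^2 := by
    rw [hXY, hrepr]
    exact Finset.sum_congr rfl fun i _ => by rw [hreprY]; ring
  have hxx : x ⬝ᵥ x = ∑ i, (b.repr X i)^2 := by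
    rw [hXX, hrepr]
    exact Finset.sum_congr rfl fun i _ => by ring
  rw [hxAx, hxx, Finset.mul_sum]
  exact Finset.sum_le_sum fun i _ =>
    mul_le_mul_of_nonneg_right (hμ i) (sq_nonneg _)

lemma shift_posDef {n : Type*} [Fintype n] [DecidableEq n] [Nonempty n]
    {A : Matrix n n ℝ} (hA : A.IsHermitian) (c : ℝ)
    (hc : ∀ i, c < hA.eigenvalues i) : (A - c • (1 : Matrix n n ℝ)).PosDef := by
  classical
  rw [posDef_iff_dotProduct_mulVec]
  constructor
  · refine IsHermitian.sub hA ?_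
    unfold IsHermitian
    rw [conjTranspose_smul, conjTranspose_one]
    simp
  · intro x hx
    have hxx : (0:ℝ) < x ⬝ᵥ x := by
      rcases lt_or_eq_of_le (Finset.sum_nonneg (fun i _ => mul_self_nonneg (x i))) with h | h
      · exact h
      · exact absurd (dotProduct_self_eq_zero.mp h.symm) hx
    set μ := Finset.univ.inf' (Finset.univ_nonempty_iff.mpr ‹Nonempty n›) hA.eigenvalues with hμdef
    have hμle : ∀ i, μ ≤ hA.eigenvalues i := fun i =>
      Finset.inf'_le _ (Finset.mem_univ i)
    have hcμ : c < μ := by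
      obtain ⟨i, _, hi⟩ := Finset.exists_mem_eq_inf' (Finset.univ_nonempty_iff.mpr ‹Nonempty n›) hA.eigenvalues
      rw [hμdef, hi]; exact hc i
    have hray := rayleigh_lower hA μ hμle x
    have hstar : star x = x := by funext i; simp
    rw [hstar, sub_mulVec, dotProduct_sub, smul_mulVec, one_mulVec, dotProduct_smul]
    have : c * (x ⬝ᵥ x) < μ * (x ⬝ᵥ x) := by
      exact mul_lt_mul_of_pos_right hcμ hxx
    simp only [smul_eq_mul]
    linarith

/-- The Kronecker sum `Ω ⊕ Γ := Ω ⊗ I_t + I_s ⊗ Γ`. -/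
def kronSum {s t : ℕ} (Ω : Matrix (Fin s) (Fin s) ℝ)
    (Γ : Matrix (Fin t) (Fin t) ℝ) : Matrix (Fin s × Fin t) (Fin s × Fin t) ℝ :=
  Ω ⊗ₖ (1 : Matrix (Fin t) (Fin t) ℝ) + (1 : Matrix (Fin s) (Fin s) ℝ) ⊗ₖ Γ

/-- The smallest eigenvalue of a symmetric matrix. -/
noncomputable def lambdaMin {n : Type*} [Fintype n] [DecidableEq n]
    {A : Matrix n n ℝ} (hA : A.IsHermitian) (hn : Nonempty n) : ℝ :=
  Finset.univ.inf' (Finset.univ_nonempty_iff.mpr hn) hA.eigenvalues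

theorem stmt4 {s t : ℕ} (hs : 0 < s) (ht : 0 < t)
    (Γ : Matrix (Fin t) (Fin t) ℝ) (Ω : Matrix (Fin s) (Fin s) ℝ)
    (hΓ : Γ.IsHermitian) (hΩ : Ω.IsHermitian)
    (hK : (kronSum Ω Γ).PosDef)
    (c : ℝ) (hc : c = (lambdaMin hΓ ⟨⟨0, ht⟩⟩ - lambdaMin hΩ ⟨⟨0, hs⟩⟩) / 2) :
    (Γ - c • (1 : Matrix (Fin t) (Fin t) ℝ)).PosDef ∧
      (Ω + c • (1 : Matrix (Fin s) (Fin s) ℝ)).PosDef := by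
  have hsne : Nonempty (Fin s) := ⟨⟨0, hs⟩⟩
  have htne : Nonempty (Fin t) := ⟨⟨0, ht⟩⟩
  set mΩ := lambdaMin hΩ ⟨⟨0, hs⟩⟩ with hmΩ
  set mΓ := lambdaMin hΓ ⟨⟨0, ht⟩⟩ with hmΓ
  -- Step 1: mΩ + mΓ > 0
  have hsum : 0 < mΩ + mΓ := by
    obtain ⟨i, _, hi⟩ := Finset.exists_mem_eq_inf'
      (Finset.univ_nonempty_iff.mpr hsne) hΩ.eigenvalues
    obtain ⟨j, _, hj⟩ := Finset.exists_mem_eq_inf'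
      (Finset.univ_nonempty_iff.mpr htne) hΓ.eigenvalues
    set u : Fin s → ℝ := ⇑(hΩ.eigenvectorBasis i) with hu
    set v : Fin t → ℝ := ⇑(hΓ.eigenvectorBasis j) with hv
    have hune : u ≠ 0 := by
      intro h
      exact hΩ.eigenvectorBasis.orthonormal.ne_zero i (by ext k; exact congrFun h k)
    have hvne : v ≠ 0 := by
      intro h
      exact hΓ.eigenvectorBasis.orthonormal.ne_zero j (by ext k; exact congrFun h k)
    set x : Fin s × Fin t → ℝ := fun p => u p.1 * v p.2 with hx
    have hxne : x ≠ 0 := by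
      obtain ⟨k, hk⟩ := Function.ne_iff.mp hune
      obtain ⟨l, hl⟩ := Function.ne_iff.mp hvne
      intro h
      have := congrFun h (k, l)
      simp only [hx, Pi.zero_apply] at this
      exact (mul_ne_zero (by simpa using hk) (by simpa using hl)) this
    have hmul : (kronSum Ω Γ) *ᵥ x = (hΩ.eigenvalues i + hΓ.eigenvalues j) • x := by
      rw [kronSum, add_mulVec, hx, kron_mulVec_prod, kron_mulVec_prod]
      funext p
      rw [hΩ.mulVec_eigenvectorBasis, hΓ.mulVec_eigenvectorBasis]
      simp only [one_mulVec, Pi.smul_apply, Pi.add_apply, smul_eq_mul]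
      ring
    have hpos := hK.dotProduct_mulVec_pos hxne
    have hstar : star x = x := by funext p; simp
    rw [hstar, hmul, dotProduct_smul, smul_eq_mul] at hpos
    have hxx : (0:ℝ) < x ⬝ᵥ x := by
      rcases lt_or_eq_of_le (Finset.sum_nonneg (fun p _ => mul_self_nonneg (x p))) with h | h
      · exact h
      · exact absurd (dotProduct_self_eq_zero.mp h.symm) hxne
    have hij : 0 < hΩ.eigenvalues i + hΓ.eigenvalues j := by
      rcases mul_pos_iff.mp hpos with h | h
      · exact h.1
      · exact absurd hxx (not_lt.mpr h.2.le)
    calc (0:ℝ) < hΩ.eigenvalues i + hΓ.eigenvalues j := hij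
      _ = mΩ + mΓ := by rw [hmΩ, hmΓ, lambdaMin, lambdaMin, hi, hj]
  constructor
  · apply shift_posDef hΓ
    intro k
    have hk : mΓ ≤ hΓ.eigenvalues k := Finset.inf'_le _ (Finset.mem_univ k)
    rw [hc]; linarith
  · have heq : Ω + c • (1 : Matrix (Fin s) (Fin s) ℝ)
        = Ω - (-c) • (1 : Matrix (Fin s) (Fin s) ℝ) := by
      rw [neg_smul, sub_neg_eq_add]
    rw [heq]
    apply shift_posDef hΩ
    intro k
    have hk : mΩ ≤ hΩ.eigenvalues k := Finset.inf'_le _ (Finset.mem_univ k)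
    rw [hc]; linarith
end

section
/- Let β > 0 and Γ ∈ S^t with eigenvalues λ_1,…,λ_t. For Ω ∈ S^s with eigenvalue decomposition Ω = Q·Diag(μ_1,…,μ_s)·Qᵀ (Q orthogonal), the unique minimizer over Υ ∈ S^s of (1/2)‖Υ − Ω‖_F² − β log det(Υ ⊕ Γ), subject to Υ ⊕ Γ positive definite, is Υ* = Q·Diag(α_1,…,α_s)·Qᵀ, where each α_j is the unique solution of α_j − μ_j − ∑_{i=1}^t β/(α_j + λ_i) = 0 with α_j > −min_i λ_i. -/
open Matrix
open scoped Kronecker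

/-- Squared Frobenius norm. -/
def frobSq {n : ℕ} (A : Matrix (Fin n) (Fin n) ℝ) : ℝ :=
  ∑ i, ∑ j, (A i j) ^ 2

section Helpers
variable {n : Type*} [Fintype n] [DecidableEq n]

/-- Conjugation of a PosDef matrix by an invertible real matrix. -/
lemma myPosDef_conj {M : Matrix n n ℝ} (hM : IsUnit M) {A : Matrix n n ℝ}
    (hA : A.PosDef) : (M * A * Mᵀ).PosDef := by
  rw [Matrix.posDef_iff_dotProduct_mulVec]; constructor
  · have hAH : Aᵀ = A := by
      simpa [Matrix.conjTranspose_eq_transpose_of_trivial] using hA.isHermitian.eq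
    simp [Matrix.IsHermitian, Matrix.conjTranspose_eq_transpose_of_trivial,
      Matrix.transpose_mul, hAH, Matrix.mul_assoc]
  · intro x hx
    have hMT : IsUnit Mᵀ := by
      rw [Matrix.isUnit_iff_isUnit_det, Matrix.det_transpose,
        ← Matrix.isUnit_iff_isUnit_det]; exact hM
    have hinj : Function.Injective (Mᵀ.mulVec) :=
      (Matrix.mulVec_injective_iff_isUnit).mpr hMT
    have hx' : Mᵀ *ᵥ x ≠ 0 := by
      intro h
      exact hx (hinj (by simpa using h))
    have h2 := hA.dotProduct_mulVec_pos (x := Mᵀ *ᵥ x) hx'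
    have h1 : (M * A * Mᵀ) *ᵥ x = M *ᵥ (A *ᵥ (Mᵀ *ᵥ x)) := by
      simp [Matrix.mulVec_mulVec, Matrix.mul_assoc]
    show 0 < star x ⬝ᵥ ((M * A * Mᵀ) *ᵥ x)
    rw [h1]
    simp only [star_trivial] at h2 ⊢
    rw [Matrix.dotProduct_mulVec, ← Matrix.mulVec_transpose]
    exact h2

lemma myTrace_eq_sum_eigs {B : Matrix n n ℝ} (hB : B.IsHermitian) :
    B.trace = ∑ i, hB.eigenvalues i := by
  conv_lhs => rw [hB.spectral_theorem, Unitary.conjStarAlgAut_apply]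
  rw [Matrix.trace_mul_cycle]
  have h1 : (star (hB.eigenvectorUnitary : Matrix n n ℝ)) *
      (hB.eigenvectorUnitary : Matrix n n ℝ) = 1 := by
    simpa using (Matrix.mem_unitaryGroup_iff').mp (hB.eigenvectorUnitary).2
  rw [h1, one_mul, Matrix.trace_diagonal]
  simp [RCLike.ofReal_real_eq_id]

lemma myEigs_one {B : Matrix n n ℝ} (hB : B.IsHermitian)
    (h : ∀ i, hB.eigenvalues i = 1) : B = 1 := by
  have h2 : (hB.eigenvectorUnitary : Matrix n n ℝ) *
      (star (hB.eigenvectorUnitary : Matrix n n ℝ)) = 1 := by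
    simpa using (Matrix.mem_unitaryGroup_iff).mp (hB.eigenvectorUnitary).2
  have := hB.spectral_theorem
  rw [show Matrix.diagonal (RCLike.ofReal ∘ hB.eigenvalues) = (1 : Matrix n n ℝ) by
      have he : hB.eigenvalues = fun _ => (1:ℝ) := funext h
      simp [RCLike.ofReal_real_eq_id, he, Function.comp_def]] at this
  rw [this, Unitary.conjStarAlgAut_apply, mul_one, h2]


lemma myLogdet_ineq {U : Matrix n n ℝ} (hU : U * Uᵀ = 1)
    {d : n → ℝ} (hd : ∀ i, 0 < d i) {X : Matrix n n ℝ} (hX : X.PosDef)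
    (hne : X ≠ U * Matrix.diagonal d * Uᵀ) :
    Real.log X.det - Real.log (U * Matrix.diagonal d * Uᵀ).det <
      ((U * Matrix.diagonal (fun i => (d i)⁻¹) * Uᵀ) * X).trace - Fintype.card n := by
  have hUt : Uᵀ * U = 1 := mul_eq_one_comm.mp hU
  have hUdet : U.det * U.det = 1 := by
    have := congrArg Matrix.det hU
    simpa [Matrix.det_mul, Matrix.det_transpose] using this
  have hUdet0 : U.det ≠ 0 := by
    intro h; rw [h, mul_zero] at hUdet; exact one_ne_zero hUdet.symm
  set e : n → ℝ := fun i => Real.sqrt (d i) with he_def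
  have he : ∀ i, 0 < e i := fun i => Real.sqrt_pos.mpr (hd i)
  have hee : ∀ i, e i * e i = d i := fun i => Real.mul_self_sqrt (hd i).le
  set E : Matrix n n ℝ := Matrix.diagonal (fun i => (e i)⁻¹) with hE_def
  set E' : Matrix n n ℝ := Matrix.diagonal e with hE'_def
  have hEE' : E * E' = 1 := by
    rw [hE_def, hE'_def, Matrix.diagonal_mul_diagonal]
    rw [show (fun i => (e i)⁻¹ * e i) = fun _ => (1:ℝ) from
      funext fun i => inv_mul_cancel₀ (he i).ne']
    exact Matrix.diagonal_one
  have hE'E : E' * E = 1 := mul_eq_one_comm.mp hEE'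
  have hEE : E * E = Matrix.diagonal (fun i => (d i)⁻¹) := by
    rw [hE_def, Matrix.diagonal_mul_diagonal]
    exact congrArg Matrix.diagonal (funext fun i => by rw [← mul_inv, hee])
  have hE'E' : E' * E' = Matrix.diagonal d := by
    rw [hE'_def, Matrix.diagonal_mul_diagonal]
    exact congrArg Matrix.diagonal (funext fun i => hee i)
  -- associativity helpers
  have aU : ∀ A : Matrix n n ℝ, U * (Uᵀ * A) = A := fun A => by
    rw [← Matrix.mul_assoc, hU, one_mul]
  have aE'E : ∀ A : Matrix n n ℝ, E' * (E * A) = A := fun A => by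
    rw [← Matrix.mul_assoc, hE'E, one_mul]
  have aEE' : ∀ A : Matrix n n ℝ, E * (E' * A) = A := fun A => by
    rw [← Matrix.mul_assoc, hEE', one_mul]
  set B : Matrix n n ℝ := E * Uᵀ * X * U * E with hB_def
  have hMunit : IsUnit (E * Uᵀ) := by
    rw [Matrix.isUnit_iff_isUnit_det, Matrix.det_mul, Matrix.det_transpose, hE_def,
      Matrix.det_diagonal]
    exact ((IsUnit.mk0 _ (Finset.prod_ne_zero_iff.mpr fun i _ =>
      inv_ne_zero (he i).ne')).mul (IsUnit.mk0 _ hUdet0))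
  have hB : B.PosDef := by
    have := myPosDef_conj hMunit hX
    have hMt : (E * Uᵀ)ᵀ = U * E := by
      rw [Matrix.transpose_mul, Matrix.transpose_transpose, hE_def,
        Matrix.diagonal_transpose]
    rw [hMt] at this
    simpa [hB_def, Matrix.mul_assoc] using this
  set ν := hB.isHermitian.eigenvalues with hν_def
  have hνpos : ∀ i, 0 < ν i := hB.eigenvalues_pos
  have hdetB : B.det = ∏ i, ν i := by
    have := hB.isHermitian.det_eq_prod_eigenvalues
    simpa [RCLike.ofReal_real_eq_id] using this
  have htraceB : B.trace = ∑ i, ν i := myTrace_eq_sum_eigs hB.isHermitian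
  have hex : ∃ i, ν i ≠ 1 := by
    by_contra h
    push_neg at h
    have hB1 : B = 1 := myEigs_one hB.isHermitian h
    apply hne
    have key : U * E' * B * E' * Uᵀ = X := by
      rw [hB_def]
      simp only [Matrix.mul_assoc]
      rw [aE'E, aEE', hU, mul_one, aU]
    rw [← key, hB1, mul_one]
    simp only [Matrix.mul_assoc]
    rw [← Matrix.mul_assoc E' E', hE'E']
  have hsum : ∑ i, Real.log (ν i) < ∑ i, (ν i - 1) := by
    obtain ⟨k, hk⟩ := hex
    exact Finset.sum_lt_sum
      (fun i _ => Real.log_le_sub_one_of_pos (hνpos i))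
      ⟨k, Finset.mem_univ k, Real.log_lt_sub_one_of_pos (hνpos k) hk⟩
  have hlogB : Real.log B.det = ∑ i, Real.log (ν i) := by
    rw [hdetB, Real.log_prod fun i _ => (hνpos i).ne']
  have hdX0 : (U * Matrix.diagonal d * Uᵀ).det = ∏ i, d i := by
    rw [Matrix.det_mul, Matrix.det_mul, Matrix.det_transpose, Matrix.det_diagonal]
    calc U.det * (∏ i, d i) * U.det = U.det * U.det * ∏ i, d i := by ring
      _ = ∏ i, d i := by rw [hUdet, one_mul]
  have hprodd : 0 < ∏ i, d i := Finset.prod_pos fun i _ => hd i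
  have hdetB' : B.det = X.det * (∏ i, d i)⁻¹ := by
    rw [hB_def]
    simp only [Matrix.det_mul, Matrix.det_transpose, hE_def, Matrix.det_diagonal]
    calc (∏ i, (e i)⁻¹) * U.det * X.det * U.det * ∏ i, (e i)⁻¹
        = (U.det * U.det) * X.det * ((∏ i, (e i)⁻¹) * ∏ i, (e i)⁻¹) := by ring
      _ = X.det * (∏ i, d i)⁻¹ := by
          rw [hUdet, one_mul]
          congr 1
          rw [← Finset.prod_mul_distrib, ← Finset.prod_inv_distrib]
          exact Finset.prod_congr rfl fun i _ => by rw [← mul_inv, hee]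
  have hlogdet : Real.log B.det
      = Real.log X.det - Real.log (U * Matrix.diagonal d * Uᵀ).det := by
    rw [hdetB', Real.log_mul hX.det_pos.ne' (inv_ne_zero hprodd.ne'),
      Real.log_inv, hdX0]
    ring
  have htraceGX : ((U * Matrix.diagonal (fun i => (d i)⁻¹) * Uᵀ) * X).trace = B.trace := by
    have h1 : ((U * Matrix.diagonal (fun i => (d i)⁻¹) * Uᵀ) * X).trace
        = ((Matrix.diagonal (fun i => (d i)⁻¹) * (Uᵀ * (X * U)))).trace := by
      rw [show (U * Matrix.diagonal (fun i => (d i)⁻¹) * Uᵀ) * X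
          = U * (Matrix.diagonal (fun i => (d i)⁻¹) * (Uᵀ * X)) by
        simp only [Matrix.mul_assoc], Matrix.trace_mul_comm]
      simp only [Matrix.mul_assoc]
    have h2 : B.trace = ((Matrix.diagonal (fun i => (d i)⁻¹) * (Uᵀ * (X * U)))).trace := by
      rw [hB_def, show E * Uᵀ * X * U * E = (E * (Uᵀ * (X * U))) * E by
        simp only [Matrix.mul_assoc], Matrix.trace_mul_comm, ← Matrix.mul_assoc E E, hEE]
    rw [h1, h2]
  have hsum2 : ∑ i, (ν i - 1) = B.trace - Fintype.card n := by
    rw [htraceB, Finset.sum_sub_distrib]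
    simp
  rw [← hlogdet, hlogB, htraceGX, ← hsum2]
  exact hsum

end Helpers

/-- The proximal operator of `-β log det (· ⊕ Γ)`: the unique minimizer of
`(1/2)‖Υ - Ω‖_F² - β log det (Υ ⊕ Γ)` over `{Υ : Υ ⊕ Γ ≻ 0}` is
`Q Diag(α) Qᵀ`, where `Ω = Q Diag(μ) Qᵀ` and each `α j` solves the stated
univariate equation. -/
theorem stmt10 {s t : ℕ} (ht : 0 < t) (β : ℝ) (hβ : 0 < β)
    (Γ : Matrix (Fin t) (Fin t) ℝ) (hΓ : Γ.IsHermitian)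
    (Ω : Matrix (Fin s) (Fin s) ℝ) (hΩ : Ω.IsHermitian)
    (Q : Matrix (Fin s) (Fin s) ℝ) (hQ : Q * Qᵀ = 1)
    (μ : Fin s → ℝ) (hdecomp : Ω = Q * Matrix.diagonal μ * Qᵀ)
    (α : Fin s → ℝ)
    (hαgt : ∀ j, α j >
      -(Finset.univ.inf' ⟨⟨0, ht⟩, Finset.mem_univ _⟩ hΓ.eigenvalues))
    (hαeq : ∀ j, α j - μ j - ∑ i : Fin t, β / (α j + hΓ.eigenvalues i) = 0) :
    let F : Matrix (Fin s) (Fin s) ℝ → ℝ := fun Υ =>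
      (1 / 2) * frobSq (Υ - Ω) - β * Real.log (kronSum Υ Γ).det
    let S : Set (Matrix (Fin s) (Fin s) ℝ) :=
      {Υ | Υ.IsHermitian ∧ (kronSum Υ Γ).PosDef}
    let Υstar : Matrix (Fin s) (Fin s) ℝ := Q * Matrix.diagonal α * Qᵀ
    Υstar ∈ S ∧ ∀ Υ ∈ S, Υ ≠ Υstar → F Υstar < F Υ := by
  intro F S Υstar
  set lam := hΓ.eigenvalues with hlam_def
  set P : Matrix (Fin t) (Fin t) ℝ := (hΓ.eigenvectorUnitary : Matrix (Fin t) (Fin t) ℝ)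
    with hP_def
  have hP : P * Pᵀ = 1 := by
    have := (Matrix.mem_unitaryGroup_iff).mp hΓ.eigenvectorUnitary.2
    simpa [Matrix.star_eq_conjTranspose,
      Matrix.conjTranspose_eq_transpose_of_trivial] using this
  have hPt : Pᵀ * P = 1 := mul_eq_one_comm.mp hP
  have hQt : Qᵀ * Q = 1 := mul_eq_one_comm.mp hQ
  have hΓdec : Γ = P * Matrix.diagonal lam * Pᵀ := by
    have := hΓ.spectral_theorem
    simpa [RCLike.ofReal_real_eq_id, Matrix.star_eq_conjTranspose,
      Matrix.conjTranspose_eq_transpose_of_trivial, Function.comp_def] using this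
  set U : Matrix (Fin s × Fin t) (Fin s × Fin t) ℝ := Q ⊗ₖ P with hU_def
  have hUT : Uᵀ = Qᵀ ⊗ₖ Pᵀ := (Matrix.kroneckerMap_transpose _ Q P).symm
  have hU : U * Uᵀ = 1 := by
    rw [hUT, hU_def, ← Matrix.mul_kronecker_mul, hQ, hP, Matrix.one_kronecker_one]
  have hUtU : Uᵀ * U = 1 := mul_eq_one_comm.mp hU
  set d : Fin s × Fin t → ℝ := fun p => α p.1 + lam p.2 with hd_def
  have hd : ∀ p, 0 < d p := by
    intro p
    have h1 : Finset.univ.inf' ⟨⟨0, ht⟩, Finset.mem_univ _⟩ lam ≤ lam p.2 :=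
      Finset.inf'_le _ (Finset.mem_univ _)
    have h2 := hαgt p.1
    simp only [hd_def]
    linarith
  -- the Kronecker sum at Υstar is U diag d Uᵀ
  have hX0 : kronSum Υstar Γ = U * Matrix.diagonal d * Uᵀ := by
    have h1 : U * (Matrix.diagonal α ⊗ₖ (1 : Matrix (Fin t) (Fin t) ℝ)) * Uᵀ
        = Υstar ⊗ₖ (1 : Matrix (Fin t) (Fin t) ℝ) := by
      rw [hUT, hU_def, ← Matrix.mul_kronecker_mul, ← Matrix.mul_kronecker_mul, mul_one, hP]
    have h2 : U * ((1 : Matrix (Fin s) (Fin s) ℝ) ⊗ₖ Matrix.diagonal lam) * Uᵀ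
        = (1 : Matrix (Fin s) (Fin s) ℝ) ⊗ₖ Γ := by
      rw [hUT, hU_def, ← Matrix.mul_kronecker_mul, ← Matrix.mul_kronecker_mul, mul_one, hQ,
        ← hΓdec]
    have h3 : Matrix.diagonal α ⊗ₖ (1 : Matrix (Fin t) (Fin t) ℝ)
        + (1 : Matrix (Fin s) (Fin s) ℝ) ⊗ₖ Matrix.diagonal lam = Matrix.diagonal d := by
      rw [← Matrix.diagonal_one, ← Matrix.diagonal_one,
        Matrix.diagonal_kronecker_diagonal, Matrix.diagonal_kronecker_diagonal,
        Matrix.diagonal_add]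
      exact congrArg Matrix.diagonal (funext fun p => by simp [hd_def])
    rw [kronSum, ← h1, ← h2, ← add_mul, ← mul_add, h3]
  have hUunit : IsUnit U := by
    rw [Matrix.isUnit_iff_isUnit_det]
    refine IsUnit.of_mul_eq_one Uᵀ.det ?_
    have := congrArg Matrix.det hU
    simpa [Matrix.det_mul] using this
  have hmem : Υstar ∈ S := by
    constructor
    · show Υstarᴴ = Υstar
      have hα : (Matrix.diagonal α)ᵀ = Matrix.diagonal α := Matrix.diagonal_transpose α
      simp only [Υstar, Matrix.conjTranspose_eq_transpose_of_trivial, Matrix.transpose_mul,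
        Matrix.transpose_transpose, hα, Matrix.mul_assoc]
    · show (kronSum Υstar Γ).PosDef
      rw [hX0]
      exact myPosDef_conj hUunit (Matrix.PosDef.diagonal hd)
  refine ⟨hmem, ?_⟩
  intro Υ hΥ hne
  obtain ⟨hΥH, hΥPD⟩ := hΥ
  set D : Matrix (Fin s) (Fin s) ℝ := Υ - Υstar with hD_def
  have hΥsym : ∀ a b, Υ b a = Υ a b := by
    intro a b
    have h1 : Υᵀ = Υ := by
      simpa [Matrix.conjTranspose_eq_transpose_of_trivial] using hΥH.eq
    exact (congrFun (congrFun h1 a) b).symm ▸ rfl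
  have hΥstarsym : ∀ a b, Υstar b a = Υstar a b := by
    intro a b
    have h1 : Υstarᵀ = Υstar := by
      simpa [Matrix.conjTranspose_eq_transpose_of_trivial] using hmem.1.eq
    exact (congrFun (congrFun h1 a) b).symm ▸ rfl
  have hDsym : ∀ a b, D b a = D a b := by
    intro a b
    simp only [hD_def, Matrix.sub_apply, hΥsym a b, hΥstarsym a b]
  set E : Matrix (Fin s) (Fin s) ℝ := Qᵀ * (D * Q) with hE_def
  have hΥeq : Υ = Υstar + D := by rw [hD_def, add_sub_cancel]
  have hsplit : kronSum Υ Γ = (U * Matrix.diagonal d * Uᵀ) + D ⊗ₖ (1 : Matrix (Fin t) (Fin t) ℝ) := by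
    rw [← hX0]
    show kronSum Υ Γ = kronSum Υstar Γ + D ⊗ₖ (1 : Matrix (Fin t) (Fin t) ℝ)
    rw [kronSum, kronSum, hΥeq, Matrix.add_kronecker]
    abel
  have hXne : kronSum Υ Γ ≠ U * Matrix.diagonal d * Uᵀ := by
    intro h
    rw [hsplit] at h
    have h0 : D ⊗ₖ (1 : Matrix (Fin t) (Fin t) ℝ) = 0 := by
      have := add_eq_left.mp h
      exact this
    have hD0 : D = 0 := by
      funext a b
      have := congrFun (congrFun h0 (a, ⟨0, ht⟩)) (b, ⟨0, ht⟩)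
      simpa [Matrix.kroneckerMap_apply, Matrix.one_apply_eq] using this
    exact hne (by rw [hΥeq, hD0, add_zero])
  have main := myLogdet_ineq hU hd hΥPD hXne
  -- trace computations
  have aUt : ∀ A : Matrix (Fin s × Fin t) (Fin s × Fin t) ℝ, Uᵀ * (U * A) = A := fun A => by
    rw [← Matrix.mul_assoc, hUtU, one_mul]
  have htr1 : (U * Matrix.diagonal (fun p => (d p)⁻¹) * Uᵀ) * (U * Matrix.diagonal d * Uᵀ)
      = 1 := by
    simp only [Matrix.mul_assoc]
    rw [aUt, ← Matrix.mul_assoc (Matrix.diagonal fun p => (d p)⁻¹) (Matrix.diagonal d),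
      Matrix.diagonal_mul_diagonal]
    rw [show (fun p => (d p)⁻¹ * d p) = fun _ => (1:ℝ) from
      funext fun p => inv_mul_cancel₀ (hd p).ne', Matrix.diagonal_one, one_mul, hU]
  have hconj : Uᵀ * ((D ⊗ₖ (1 : Matrix (Fin t) (Fin t) ℝ)) * U)
      = E ⊗ₖ (1 : Matrix (Fin t) (Fin t) ℝ) := by
    rw [hUT, hU_def, ← Matrix.mul_kronecker_mul, ← Matrix.mul_kronecker_mul, one_mul, hPt,
      hE_def]
  have htraced : ∀ f : Fin s × Fin t → ℝ, ∀ M : Matrix (Fin s × Fin t) (Fin s × Fin t) ℝ,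
      (Matrix.diagonal f * M).trace = ∑ p, f p * M p p := by
    intro f M
    simp [Matrix.trace, Matrix.diag, Matrix.diagonal_mul]
  have tcomp : ((U * Matrix.diagonal (fun p => (d p)⁻¹) * Uᵀ)
      * (D ⊗ₖ (1 : Matrix (Fin t) (Fin t) ℝ))).trace
      = ∑ j, (∑ i, (d (j, i))⁻¹) * E j j := by
    rw [show (U * Matrix.diagonal (fun p => (d p)⁻¹) * Uᵀ)
        * (D ⊗ₖ (1 : Matrix (Fin t) (Fin t) ℝ))
        = U * ((Matrix.diagonal fun p => (d p)⁻¹) * (Uᵀ * (D ⊗ₖ (1 : Matrix (Fin t) (Fin t) ℝ)))) by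
      simp only [Matrix.mul_assoc], Matrix.trace_mul_comm]
    rw [show (Matrix.diagonal fun p => (d p)⁻¹) * (Uᵀ * (D ⊗ₖ (1 : Matrix (Fin t) (Fin t) ℝ))) * U
        = (Matrix.diagonal fun p => (d p)⁻¹) * (Uᵀ * ((D ⊗ₖ (1 : Matrix (Fin t) (Fin t) ℝ)) * U)) by
      simp only [Matrix.mul_assoc], hconj, htraced]
    rw [Fintype.sum_prod_type]
    refine Finset.sum_congr rfl fun j _ => ?_
    rw [Finset.sum_mul]
    exact Finset.sum_congr rfl fun i _ => by
      simp [Matrix.kroneckerMap_apply, Matrix.one_apply_eq]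
  have hipT : β * ((U * Matrix.diagonal (fun p => (d p)⁻¹) * Uᵀ)
      * (D ⊗ₖ (1 : Matrix (Fin t) (Fin t) ℝ))).trace
      = ∑ j, (α j - μ j) * E j j := by
    rw [tcomp, Finset.mul_sum]
    refine Finset.sum_congr rfl fun j _ => ?_
    have h2 : ∑ i, β / (α j + lam i) = β * ∑ i, (d (j, i))⁻¹ := by
      rw [Finset.mul_sum]
      exact Finset.sum_congr rfl fun i _ => div_eq_mul_inv _ _
    have h3 := hαeq j
    rw [h2] at h3
    rw [← mul_assoc, show β * ∑ i, (d (j, i))⁻¹ = α j - μ j by linarith]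
  -- inner product identity
  have hstarom : Υstar - Ω = Q * Matrix.diagonal (fun j => α j - μ j) * Qᵀ := by
    show Q * Matrix.diagonal α * Qᵀ - Ω = _
    rw [hdecomp, ← Matrix.sub_mul, ← Matrix.mul_sub, Matrix.diagonal_sub]
  have hip : ∑ a, ∑ b, (Υstar - Ω) a b * D a b = ∑ j, (α j - μ j) * E j j := by
    have htr : ∑ a, ∑ b, (Υstar - Ω) a b * D a b = ((Υstar - Ω) * D).trace := by
      simp only [Matrix.trace, Matrix.diag, Matrix.mul_apply]
      refine Finset.sum_congr rfl fun a _ => Finset.sum_congr rfl fun b _ => ?_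
      rw [hDsym b a]
    rw [htr, hstarom]
    rw [show Q * Matrix.diagonal (fun j => α j - μ j) * Qᵀ * D
        = Q * (Matrix.diagonal (fun j => α j - μ j) * (Qᵀ * D)) by
      simp only [Matrix.mul_assoc], Matrix.trace_mul_comm]
    rw [show Matrix.diagonal (fun j => α j - μ j) * (Qᵀ * D) * Q
        = Matrix.diagonal (fun j => α j - μ j) * (Qᵀ * (D * Q)) by
      simp only [Matrix.mul_assoc]]
    have : (Matrix.diagonal (fun j => α j - μ j) * E).trace = ∑ j, (α j - μ j) * E j j := by
      simp [Matrix.trace, Matrix.diag, Matrix.diagonal_mul]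
    rw [← hE_def, this]
  -- Frobenius expansion
  have hfe : frobSq (Υ - Ω) = frobSq (Υstar - Ω)
      + 2 * (∑ a, ∑ b, (Υstar - Ω) a b * D a b) + frobSq D := by
    simp only [frobSq]
    calc ∑ a, ∑ b, ((Υ - Ω) a b)^2
        = ∑ a, ∑ b, (((Υstar - Ω) a b)^2 + 2 * ((Υstar - Ω) a b * D a b) + (D a b)^2) := by
          refine Finset.sum_congr rfl fun a _ => Finset.sum_congr rfl fun b _ => ?_
          have h : (Υ - Ω) a b = (Υstar - Ω) a b + D a b := by
            simp only [hD_def, Matrix.sub_apply]; ring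
          rw [h]; ring
      _ = _ := by
          simp only [Finset.sum_add_distrib, Finset.mul_sum]
  have hDfrob : 0 ≤ frobSq D :=
    Finset.sum_nonneg fun a _ => Finset.sum_nonneg fun b _ => sq_nonneg _
  -- conclude
  show (1/2) * frobSq (Υstar - Ω) - β * Real.log (kronSum Υstar Γ).det
      < (1/2) * frobSq (Υ - Ω) - β * Real.log (kronSum Υ Γ).det
  rw [hX0]
  have htrace : ((U * Matrix.diagonal (fun p => (d p)⁻¹) * Uᵀ) * kronSum Υ Γ).trace
      = (Fintype.card (Fin s × Fin t) : ℝ)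
        + ((U * Matrix.diagonal (fun p => (d p)⁻¹) * Uᵀ)
            * (D ⊗ₖ (1 : Matrix (Fin t) (Fin t) ℝ))).trace := by
    rw [hsplit, mul_add, Matrix.trace_add, htr1, Matrix.trace_one]
  rw [htrace] at main
  have main2 : Real.log (kronSum Υ Γ).det - Real.log (U * Matrix.diagonal d * Uᵀ).det
      < ((U * Matrix.diagonal (fun p => (d p)⁻¹) * Uᵀ)
          * (D ⊗ₖ (1 : Matrix (Fin t) (Fin t) ℝ))).trace := by linarith
  have main3 := mul_lt_mul_of_pos_left main2 hβ
  rw [hipT, ← hip] at main3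
  linarith [hfe, hDfrob, main3]
end

section
/- Let Γ ∈ S^t with eigenpairs (λ_i, u_i) and Ω ∈ S^s with eigenpairs (μ_j, v_j), and suppose Ω ⊕ Γ is positive definite. Then the gradient of Γ ↦ log det(Ω ⊕ Γ) is ∑_{i=1}^t (∑_{j=1}^s 1/(μ_j + λ_i)) u_i u_iᵀ, and the gradient of Ω ↦ log det(Ω ⊕ Γ) is ∑_{j=1}^s (∑_{i=1}^t 1/(μ_j + λ_i)) v_j v_jᵀ. -/
open Matrix
open scoped Kronecker

set_option linter.unusedSectionVars false

section Helpers

variable {n : Type*} [Fintype n] [DecidableEq n]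

lemma mySum_vecMulVec (u : n → n → ℝ)
    (hu : ∀ i j, u i ⬝ᵥ u j = if i = j then (1:ℝ) else 0) :
    ∑ i, vecMulVec (u i) (u i) = (1 : Matrix n n ℝ) := by
  have h1 : (Matrix.of u) * (Matrix.of u)ᵀ = 1 := by
    ext i j
    simpa [Matrix.mul_apply, dotProduct, Matrix.one_apply] using hu i j
  have h2 : (Matrix.of u)ᵀ * (Matrix.of u) = 1 := mul_eq_one_comm.mp h1
  ext a b
  have := congrFun (congrFun h2 a) b
  simpa [Matrix.mul_apply, Matrix.sum_apply, vecMulVec_apply] using this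

lemma myVecMulVec_mul (a b c d : n → ℝ) :
    vecMulVec a b * vecMulVec c d = (b ⬝ᵥ c) • vecMulVec a d := by
  ext i j
  simp only [Matrix.mul_apply, vecMulVec_apply, Matrix.smul_apply, smul_eq_mul, dotProduct,
    Finset.sum_mul]
  exact Finset.sum_congr rfl fun k _ => by ring

lemma myTrace_vecMulVec_mul (a b : n → ℝ) (C : Matrix n n ℝ) :
    Matrix.trace (vecMulVec a b * C) = b ⬝ᵥ (C *ᵥ a) := by
  simp only [Matrix.trace, Matrix.diag, Matrix.mul_apply, vecMulVec_apply, dotProduct,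
    Matrix.mulVec, Finset.mul_sum]
  rw [Finset.sum_comm]
  exact Finset.sum_congr rfl fun k _ => Finset.sum_congr rfl fun i _ => by ring

lemma mySum_mulVec {ι : Type*} (s : Finset ι) (A : ι → Matrix n n ℝ) (x : n → ℝ) :
    (∑ i ∈ s, A i) *ᵥ x = ∑ i ∈ s, A i *ᵥ x := by
  ext j
  simp only [Matrix.mulVec, dotProduct, Matrix.sum_apply, Finset.sum_apply, Finset.sum_mul]
  exact Finset.sum_comm

lemma myVecMulVec_mulVec (a b x : n → ℝ) :
    vecMulVec a b *ᵥ x = (b ⬝ᵥ x) • a := by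
  ext i
  simp only [Matrix.mulVec, dotProduct, vecMulVec_apply, Pi.smul_apply, smul_eq_mul,
    Finset.sum_mul]
  exact Finset.sum_congr rfl fun k _ => by ring

lemma myHasDerivAt_log_det (A B : Matrix n n ℝ) (hA : A.det ≠ 0) :
    HasDerivAt (fun ε : ℝ => Real.log (A + ε • B).det) (Matrix.trace (A⁻¹ * B)) 0 := by
  set M := A⁻¹ * B with hM
  have hunit : IsUnit A.det := isUnit_iff_ne_zero.mpr hA
  have key : ∀ ε : ℝ, (A + ε • B).det = A.det * (1 + ε • M).det := by
    intro ε
    rw [← Matrix.det_mul]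
    congr 1
    rw [Matrix.mul_add, Matrix.mul_one, Matrix.mul_smul, hM, ← Matrix.mul_assoc,
      Matrix.mul_nonsing_inv A hunit, Matrix.one_mul]
  have hd : HasDerivAt (fun ε : ℝ => (1 + ε • M).det) (Matrix.trace M) 0 := by
    have hfun : (fun ε : ℝ => (1 + ε • M).det)
        = fun ε : ℝ => 1 + Matrix.trace M * ε +
          ((1 + (Polynomial.X : Polynomial ℝ) • M.map Polynomial.C).det).divX.divX.eval ε * ε ^ 2 := by
      funext ε; exact Matrix.det_one_add_smul ε M
    rw [hfun]
    have h1 : HasDerivAt (fun ε : ℝ => 1 + Matrix.trace M * ε) (Matrix.trace M) 0 := by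
      simpa using (hasDerivAt_id (0:ℝ)).const_mul (Matrix.trace M) |>.const_add 1
    have h2 : HasDerivAt (fun ε : ℝ =>
        ((1 + (Polynomial.X : Polynomial ℝ) • M.map Polynomial.C).det).divX.divX.eval ε * ε ^ 2) 0 0 := by
      have hp := Polynomial.hasDerivAt ((1 + (Polynomial.X : Polynomial ℝ) • M.map Polynomial.C).det).divX.divX (0:ℝ)
      have hq := hasDerivAt_pow 2 (0:ℝ)
      exact (hp.mul hq).congr_deriv (by simp)
    exact (h1.add h2).congr_deriv (by simp)
  have hf : HasDerivAt (fun ε : ℝ => A.det * (1 + ε • M).det) (A.det * Matrix.trace M) 0 :=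
    hd.const_mul A.det
  have hne : A.det * (1 + (0:ℝ) • M).det ≠ 0 := by simp [hA]
  have hlog := hf.log hne
  have : (fun ε : ℝ => Real.log (A.det * (1 + ε • M).det))
      = fun ε : ℝ => Real.log (A + ε • B).det := by
    funext ε; rw [key ε]
  rw [this] at hlog
  convert hlog using 1
  field_simp
  simp

end Helpers

/-- Gradients (in the Frobenius inner product, expressed via directional
derivatives) of `Γ ↦ log det (Ω ⊕ Γ)` and `Ω ↦ log det (Ω ⊕ Γ)` in terms of
the eigenpairs `(λᵢ, uᵢ)` of `Γ` and `(μⱼ, vⱼ)` of `Ω`. -/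
theorem stmt13 {s t : ℕ}
    (Γ : Matrix (Fin t) (Fin t) ℝ) (Ω : Matrix (Fin s) (Fin s) ℝ)
    (lam : Fin t → ℝ) (u : Fin t → Fin t → ℝ)
    (μ : Fin s → ℝ) (v : Fin s → Fin s → ℝ)
    (hΓ : Γ = ∑ i, lam i • Matrix.vecMulVec (u i) (u i))
    (hu : ∀ i j, u i ⬝ᵥ u j = if i = j then (1 : ℝ) else 0)
    (hΩ : Ω = ∑ j, μ j • Matrix.vecMulVec (v j) (v j))
    (hv : ∀ i j, v i ⬝ᵥ v j = if i = j then (1 : ℝ) else 0)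
    (hpd : (kronSum Ω Γ).PosDef) :
    (∀ H : Matrix (Fin t) (Fin t) ℝ,
      HasDerivAt (fun ε : ℝ => Real.log (kronSum Ω (Γ + ε • H)).det)
        (Matrix.trace
          ((∑ i, (∑ j, (μ j + lam i)⁻¹) • Matrix.vecMulVec (u i) (u i))ᵀ * H)) 0) ∧
    (∀ H : Matrix (Fin s) (Fin s) ℝ,
      HasDerivAt (fun ε : ℝ => Real.log (kronSum (Ω + ε • H) Γ).det)
        (Matrix.trace
          ((∑ j, (∑ i, (μ j + lam i)⁻¹) • Matrix.vecMulVec (v j) (v j))ᵀ * H)) 0) := by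
  classical
  -- eigenvectors of the Kronecker sum
  set w : Fin s × Fin t → (Fin s × Fin t) → ℝ :=
    fun p q => v p.1 q.1 * u p.2 q.2 with hwdef
  have hsumu : ∀ b d, ∑ i, u i b * u i d = if b = d then (1:ℝ) else 0 := by
    intro b d
    have := congrFun (congrFun (mySum_vecMulVec u hu) b) d
    simpa [Matrix.sum_apply, vecMulVec_apply, Matrix.one_apply] using this
  have hsumv : ∀ b d, ∑ j, v j b * v j d = if b = d then (1:ℝ) else 0 := by
    intro b d
    have := congrFun (congrFun (mySum_vecMulVec v hv) b) d
    simpa [Matrix.sum_apply, vecMulVec_apply, Matrix.one_apply] using this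
  have hw : ∀ p q, w p ⬝ᵥ w q = if p = q then (1:ℝ) else 0 := by
    intro p q
    have hfac : w p ⬝ᵥ w q = (v p.1 ⬝ᵥ v q.1) * (u p.2 ⬝ᵥ u q.2) := by
      rw [dotProduct, dotProduct, dotProduct, Fintype.sum_mul_sum, Fintype.sum_prod_type]
      exact Finset.sum_congr rfl fun a _ => Finset.sum_congr rfl fun b _ => by ring
    rw [hfac, hv, hu]
    by_cases h1 : p.1 = q.1 <;> by_cases h2 : p.2 = q.2 <;>
      simp [h1, h2, Prod.ext_iff]
  -- the spectral decomposition of the Kronecker sum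
  have hA : kronSum Ω Γ
      = ∑ p : Fin s × Fin t, (μ p.1 + lam p.2) • vecMulVec (w p) (w p) := by
    ext ⟨a, b⟩ ⟨c, d⟩
    simp only [kronSum, hΩ, hΓ, Matrix.add_apply, Matrix.kroneckerMap_apply, Matrix.sum_apply,
      Matrix.smul_apply, vecMulVec_apply, smul_eq_mul, Matrix.one_apply, hwdef]
    rw [← hsumu b d, ← hsumv a c, Fintype.sum_mul_sum, Fintype.sum_mul_sum,
      Fintype.sum_prod_type, ← Finset.sum_add_distrib]
    refine Finset.sum_congr rfl fun j _ => ?_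
    rw [← Finset.sum_add_distrib]
    refine Finset.sum_congr rfl fun i _ => by ring
  -- positivity of the eigenvalues
  have hwne : ∀ p, w p ≠ 0 := by
    intro p hzero
    have h1 := hw p p
    rw [hzero] at h1
    simpa using h1
  have hmulw : ∀ p, (kronSum Ω Γ) *ᵥ w p = (μ p.1 + lam p.2) • w p := by
    intro p
    rw [hA, mySum_mulVec]
    have : ∀ q : Fin s × Fin t,
        ((μ q.1 + lam q.2) • vecMulVec (w q) (w q)) *ᵥ w p
          = (if q = p then (1:ℝ) else 0) • ((μ q.1 + lam q.2) • w q) := by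
      intro q
      rw [Matrix.smul_mulVec, myVecMulVec_mulVec, hw q p]
      rw [smul_comm]
    rw [Finset.sum_congr rfl fun q _ => this q]
    simp
  have hpos : ∀ p : Fin s × Fin t, 0 < μ p.1 + lam p.2 := by
    intro p
    have := hpd.dotProduct_mulVec_pos (hwne p)
    rw [hmulw p] at this
    have h1 : star (w p) = w p := by simp
    rw [h1, dotProduct_smul, smul_eq_mul, hw p p] at this
    simpa using this
  have hne0 : ∀ p : Fin s × Fin t, μ p.1 + lam p.2 ≠ 0 := fun p => (hpos p).ne'
  -- the inverse
  set B : Matrix (Fin s × Fin t) (Fin s × Fin t) ℝ :=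
    ∑ p : Fin s × Fin t, (μ p.1 + lam p.2)⁻¹ • vecMulVec (w p) (w p) with hBdef
  have hinv : (kronSum Ω Γ)⁻¹ = B := by
    apply Matrix.inv_eq_right_inv
    rw [hA, hBdef, Finset.sum_mul]
    have : ∀ p : Fin s × Fin t,
        ((μ p.1 + lam p.2) • vecMulVec (w p) (w p)) * B = vecMulVec (w p) (w p) := by
      intro p
      rw [hBdef, Finset.mul_sum]
      have h2 : ∀ q : Fin s × Fin t,
          ((μ p.1 + lam p.2) • vecMulVec (w p) (w p)) * ((μ q.1 + lam q.2)⁻¹ • vecMulVec (w q) (w q))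
            = (if p = q then (1:ℝ) else 0) •
              (((μ p.1 + lam p.2) * (μ q.1 + lam q.2)⁻¹) • vecMulVec (w p) (w q)) := by
        intro q
        rw [Matrix.smul_mul, Matrix.mul_smul, myVecMulVec_mul, hw p q, smul_smul, smul_smul,
          smul_smul]
        congr 1
        ring
      rw [Finset.sum_congr rfl fun q _ => h2 q]
      simp [mul_inv_cancel₀ (hne0 p)]
    rw [Finset.sum_congr rfl fun p _ => this p]
    exact mySum_vecMulVec w hw
  have hdet : (kronSum Ω Γ).det ≠ 0 := hpd.det_pos.ne'
  -- trace formula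
  have htr : ∀ C : Matrix (Fin s × Fin t) (Fin s × Fin t) ℝ,
      Matrix.trace ((kronSum Ω Γ)⁻¹ * C)
        = ∑ p : Fin s × Fin t, (μ p.1 + lam p.2)⁻¹ * (w p ⬝ᵥ (C *ᵥ w p)) := by
    intro C
    rw [hinv, hBdef, Finset.sum_mul, Matrix.trace_sum]
    refine Finset.sum_congr rfl fun p _ => ?_
    rw [Matrix.smul_mul, Matrix.trace_smul, myTrace_vecMulVec_mul, smul_eq_mul]
  constructor
  · -- Γ direction
    intro H
    have hC : ∀ ε : ℝ, kronSum Ω (Γ + ε • H)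
        = kronSum Ω Γ + ε • ((1 : Matrix (Fin s) (Fin s) ℝ) ⊗ₖ H) := by
      intro ε
      simp only [kronSum, Matrix.kronecker_add, Matrix.kronecker_smul]
      abel
    have hder := myHasDerivAt_log_det (kronSum Ω Γ)
      ((1 : Matrix (Fin s) (Fin s) ℝ) ⊗ₖ H) hdet
    have hfun : (fun ε : ℝ =>
        Real.log (kronSum Ω Γ + ε • ((1 : Matrix (Fin s) (Fin s) ℝ) ⊗ₖ H)).det)
        = fun ε : ℝ => Real.log (kronSum Ω (Γ + ε • H)).det := by
      funext ε; rw [hC ε]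
    rw [hfun] at hder
    convert hder using 1
    -- trace equality
    rw [htr]
    have hquad : ∀ p : Fin s × Fin t,
        w p ⬝ᵥ (((1 : Matrix (Fin s) (Fin s) ℝ) ⊗ₖ H) *ᵥ w p)
          = u p.2 ⬝ᵥ (H *ᵥ u p.2) := by
      intro p
      have hmv : ((1 : Matrix (Fin s) (Fin s) ℝ) ⊗ₖ H) *ᵥ w p
          = fun q : Fin s × Fin t => v p.1 q.1 * (H *ᵥ u p.2) q.2 := by
        funext q
        simp only [Matrix.mulVec, dotProduct, Fintype.sum_prod_type, Matrix.kroneckerMap_apply,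
          Matrix.one_apply, hwdef, ite_mul, one_mul, zero_mul]
        rw [Finset.sum_eq_single q.1]
        · rw [Finset.mul_sum]
          refine Finset.sum_congr rfl fun d _ => ?_
          simp only [if_true]
          ring
        · intro c _ hc
          simp [Ne.symm hc]
        · intro hq; exact absurd (Finset.mem_univ q.1) hq
      rw [hmv]
      have : (w p ⬝ᵥ fun q : Fin s × Fin t => v p.1 q.1 * (H *ᵥ u p.2) q.2)
          = (v p.1 ⬝ᵥ v p.1) * (u p.2 ⬝ᵥ (H *ᵥ u p.2)) := by
        simp only [dotProduct]
        rw [Fintype.sum_mul_sum, Fintype.sum_prod_type]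
        exact Finset.sum_congr rfl fun a _ => Finset.sum_congr rfl fun b _ => by ring
      rw [this, hv p.1 p.1]
      simp
    have hRHS : (∑ p : Fin s × Fin t, (μ p.1 + lam p.2)⁻¹ * (w p ⬝ᵥ (((1 : Matrix (Fin s) (Fin s) ℝ) ⊗ₖ H) *ᵥ w p)))
        = ∑ i, (∑ j, (μ j + lam i)⁻¹) * (u i ⬝ᵥ (H *ᵥ u i)) := by
      rw [Finset.sum_congr rfl fun p _ => by rw [hquad p], Fintype.sum_prod_type,
        Finset.sum_comm]
      refine Finset.sum_congr rfl fun i _ => ?_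
      rw [Finset.sum_mul]
    rw [hRHS]
    rw [Matrix.transpose_sum, Finset.sum_mul, Matrix.trace_sum]
    refine Finset.sum_congr rfl fun i _ => ?_
    have hT : (vecMulVec (u i) (u i))ᵀ = vecMulVec (u i) (u i) := by
      ext a b; simp [vecMulVec_apply, mul_comm]
    rw [Matrix.transpose_smul, hT, Matrix.smul_mul, Matrix.trace_smul,
      myTrace_vecMulVec_mul, smul_eq_mul]
  · -- Ω direction
    intro H
    have hC : ∀ ε : ℝ, kronSum (Ω + ε • H) Γ
        = kronSum Ω Γ + ε • (H ⊗ₖ (1 : Matrix (Fin t) (Fin t) ℝ)) := by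
      intro ε
      simp only [kronSum, Matrix.add_kronecker, Matrix.smul_kronecker]
      abel
    have hder := myHasDerivAt_log_det (kronSum Ω Γ)
      (H ⊗ₖ (1 : Matrix (Fin t) (Fin t) ℝ)) hdet
    have hfun : (fun ε : ℝ =>
        Real.log (kronSum Ω Γ + ε • (H ⊗ₖ (1 : Matrix (Fin t) (Fin t) ℝ))).det)
        = fun ε : ℝ => Real.log (kronSum (Ω + ε • H) Γ).det := by
      funext ε; rw [hC ε]
    rw [hfun] at hder
    convert hder using 1
    rw [htr]
    have hquad : ∀ p : Fin s × Fin t,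
        w p ⬝ᵥ ((H ⊗ₖ (1 : Matrix (Fin t) (Fin t) ℝ)) *ᵥ w p)
          = v p.1 ⬝ᵥ (H *ᵥ v p.1) := by
      intro p
      have hmv : (H ⊗ₖ (1 : Matrix (Fin t) (Fin t) ℝ)) *ᵥ w p
          = fun q : Fin s × Fin t => (H *ᵥ v p.1) q.1 * u p.2 q.2 := by
        funext q
        obtain ⟨a, b⟩ := q
        simp only [Matrix.mulVec, dotProduct, Fintype.sum_prod_type, Matrix.kroneckerMap_apply,
          Matrix.one_apply, hwdef, Finset.sum_mul]
        rw [Finset.sum_comm, Finset.sum_eq_single b]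
        · refine Finset.sum_congr rfl fun c _ => ?_
          rw [if_pos rfl]
          ring
        · intro d _ hd
          simp [Ne.symm hd]
        · intro hb; exact absurd (Finset.mem_univ b) hb
      rw [hmv]
      have : (w p ⬝ᵥ fun q : Fin s × Fin t => (H *ᵥ v p.1) q.1 * u p.2 q.2)
          = (v p.1 ⬝ᵥ (H *ᵥ v p.1)) * (u p.2 ⬝ᵥ u p.2) := by
        rw [show w p ⬝ᵥ (fun q : Fin s × Fin t => (H *ᵥ v p.1) q.1 * u p.2 q.2)
              = ∑ q : Fin s × Fin t, w p q * ((H *ᵥ v p.1) q.1 * u p.2 q.2) from rfl,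
          show v p.1 ⬝ᵥ (H *ᵥ v p.1) = ∑ a, v p.1 a * (H *ᵥ v p.1) a from rfl,
          show u p.2 ⬝ᵥ u p.2 = ∑ b, u p.2 b * u p.2 b from rfl,
          Fintype.sum_mul_sum, Fintype.sum_prod_type]
        exact Finset.sum_congr rfl fun a _ => Finset.sum_congr rfl fun b _ => by ring
      rw [this, hu p.2 p.2]
      simp
    have hRHS : (∑ p : Fin s × Fin t, (μ p.1 + lam p.2)⁻¹ * (w p ⬝ᵥ ((H ⊗ₖ (1 : Matrix (Fin t) (Fin t) ℝ)) *ᵥ w p)))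
        = ∑ j, (∑ i, (μ j + lam i)⁻¹) * (v j ⬝ᵥ (H *ᵥ v j)) := by
      rw [Finset.sum_congr rfl fun p _ => by rw [hquad p], Fintype.sum_prod_type]
      refine Finset.sum_congr rfl fun j _ => ?_
      rw [Finset.sum_mul]
    rw [hRHS]
    rw [Matrix.transpose_sum, Finset.sum_mul, Matrix.trace_sum]
    refine Finset.sum_congr rfl fun j _ => ?_
    have hT : (vecMulVec (v j) (v j))ᵀ = vecMulVec (v j) (v j) := by
      ext a b; simp [vecMulVec_apply, mul_comm]
    rw [Matrix.transpose_smul, hT, Matrix.smul_mul, Matrix.trace_smul,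
      myTrace_vecMulVec_mul, smul_eq_mul]
end

section
/- Let the feasible set F₂ = {(Γ,Ω) : Γ ∈ S^t_{++}, Ω ∈ S^s_{++}} and F₃ = {(Γ,Ω) : Ω ⊕ Γ ∈ S^{ts}_{++}, diag(Γ) ≥ 0, diag(Ω) ≥ 0}. Then F₂ ⊆ F₃, and for any objective f(Γ,Ω) that depends on (Γ,Ω) only through the Kronecker sum Ω ⊕ Γ, the infimum of f over F₂ equals the infimum of f over F₃. -/
open Matrix
open scoped Kronecker


variable {n : Type*} [Fintype n] [DecidableEq n]

lemma aux_sub_smul_one_posSemidef {A : Matrix n n ℝ} (hA : A.IsHermitian) {c : ℝ}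
    (h : ∀ i, c ≤ hA.eigenvalues i) : (A - c • 1).PosSemidef := by
  have key : A - c • (1 : Matrix n n ℝ) =
      (hA.eigenvectorUnitary : Matrix n n ℝ) * diagonal (fun i => hA.eigenvalues i - c) *
        star (hA.eigenvectorUnitary : Matrix n n ℝ) := by
    have hU : (hA.eigenvectorUnitary : Matrix n n ℝ) *
        star (hA.eigenvectorUnitary : Matrix n n ℝ) = 1 :=
      Matrix.mem_unitaryGroup_iff.mp (hA.eigenvectorUnitary).2
    have hd : diagonal (fun i => hA.eigenvalues i - c) =
        diagonal hA.eigenvalues - c • (1 : Matrix n n ℝ) := by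
      rw [smul_one_eq_diagonal, ← diagonal_sub]
    rw [hd, mul_sub, sub_mul]
    have : (hA.eigenvectorUnitary : Matrix n n ℝ) * (c • (1 : Matrix n n ℝ)) *
        star (hA.eigenvectorUnitary : Matrix n n ℝ) = c • (1 : Matrix n n ℝ) := by
      rw [mul_smul_comm, mul_one, smul_mul_assoc, hU]
    rw [this]
    congr 1
    have := hA.spectral_theorem
    simpa using this
  rw [key]
  exact (posSemidef_diagonal_iff.mpr fun i => sub_nonneg.mpr (h i)).mul_mul_conjTranspose_same _

lemma aux_rayleigh {A : Matrix n n ℝ} (hA : A.IsHermitian) {c : ℝ}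
    (h : ∀ i, c ≤ hA.eigenvalues i) (x : n → ℝ) :
    c * (x ⬝ᵥ x) ≤ x ⬝ᵥ A *ᵥ x := by
  have h2 := (aux_sub_smul_one_posSemidef hA h).dotProduct_mulVec_nonneg x
  simp only [sub_mulVec, dotProduct_sub, smul_mulVec, one_mulVec, dotProduct_smul,
    star_trivial, smul_eq_mul, RCLike.re_to_real] at h2
  linarith

lemma aux_unit_eigen {A : Matrix n n ℝ} (hA : A.IsHermitian) (i : n) :
    ∃ v : n → ℝ, v ⬝ᵥ v = 1 ∧ v ⬝ᵥ A *ᵥ v = hA.eigenvalues i := by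
  refine ⟨⇑(hA.eigenvectorBasis i), ?_, ?_⟩
  · have h1 : ‖hA.eigenvectorBasis i‖ = 1 := hA.eigenvectorBasis.orthonormal.1 i
    have h2 : (inner ℝ (hA.eigenvectorBasis i) (hA.eigenvectorBasis i) : ℝ) = 1 := by
      rw [real_inner_self_eq_norm_sq, h1]; norm_num
    rw [← h2, EuclideanSpace.inner_eq_star_dotProduct]
    simp [dotProduct, mul_comm]
  · have := hA.eigenvalues_eq i
    simpa using this.symm

lemma aux_kron_mulVec {m n : Type*} [Fintype m] [Fintype n]
    (A : Matrix m m ℝ) (B : Matrix n n ℝ) (v : m → ℝ) (w : n → ℝ) :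
    ((A ⊗ₖ B) *ᵥ fun p : m × n => v p.1 * w p.2) =
      fun p : m × n => (A *ᵥ v) p.1 * (B *ᵥ w) p.2 := by
  funext p
  obtain ⟨i, j⟩ := p
  simp only [mulVec, dotProduct, kroneckerMap_apply, Fintype.sum_prod_type]
  rw [Finset.sum_mul_sum]
  exact Finset.sum_congr rfl fun k _ => Finset.sum_congr rfl fun l _ => by ring

lemma aux_prod_dot {m n : Type*} [Fintype m] [Fintype n]
    (v a : m → ℝ) (w b : n → ℝ) :
    ((fun p : m × n => v p.1 * w p.2) ⬝ᵥ fun p : m × n => a p.1 * b p.2) =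
      (v ⬝ᵥ a) * (w ⬝ᵥ b) := by
  simp only [dotProduct, Fintype.sum_prod_type]
  rw [Finset.sum_mul_sum]
  exact Finset.sum_congr rfl fun k _ => Finset.sum_congr rfl fun l _ => by ring

lemma aux_kron_quad {m n : Type*} [Fintype m] [Fintype n]
    (A : Matrix m m ℝ) (B : Matrix n n ℝ) (v : m → ℝ) (w : n → ℝ) :
    (fun p : m × n => v p.1 * w p.2) ⬝ᵥ ((A ⊗ₖ B) *ᵥ fun p : m × n => v p.1 * w p.2) =
      (v ⬝ᵥ A *ᵥ v) * (w ⬝ᵥ B *ᵥ w) := by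
  rw [aux_kron_mulVec, aux_prod_dot]

lemma aux_kron_isHermitian {m n : Type*} [Fintype m] [Fintype n] [DecidableEq m] [DecidableEq n]
    {A : Matrix m m ℝ} {B : Matrix n n ℝ} (hA : A.IsHermitian) (hB : B.IsHermitian) :
    (A ⊗ₖ B).IsHermitian := by
  ext ⟨i, j⟩ ⟨k, l⟩
  simp only [conjTranspose_apply, kroneckerMap_apply, star_trivial]
  rw [show A k i = A i k from by simpa using hA.apply i k,
    show B l j = B j l from by simpa using hB.apply j l]

lemma aux_kron_one_quad {m n : Type*} [Fintype m] [Fintype n] [DecidableEq n]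
    (A : Matrix m m ℝ) (x : m × n → ℝ) :
    x ⬝ᵥ ((A ⊗ₖ (1 : Matrix n n ℝ)) *ᵥ x) =
      ∑ j : n, (fun i => x (i, j)) ⬝ᵥ A *ᵥ (fun i => x (i, j)) := by
  simp only [dotProduct, mulVec, kroneckerMap_apply, Fintype.sum_prod_type, one_apply,
    mul_ite, mul_one, mul_zero, ite_mul, zero_mul, Finset.sum_ite_eq, Finset.sum_ite_eq',
    Finset.mem_univ, if_true]
  rw [Finset.sum_comm]

lemma aux_one_kron_quad {m n : Type*} [Fintype m] [Fintype n] [DecidableEq m]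
    (B : Matrix n n ℝ) (x : m × n → ℝ) :
    x ⬝ᵥ (((1 : Matrix m m ℝ) ⊗ₖ B) *ᵥ x) =
      ∑ i : m, (fun j => x (i, j)) ⬝ᵥ B *ᵥ (fun j => x (i, j)) := by
  simp only [dotProduct, mulVec, kroneckerMap_apply, Fintype.sum_prod_type, one_apply,
    mul_ite, mul_one, mul_zero, ite_mul, zero_mul, one_mul, Finset.sum_ite_eq, Finset.sum_ite_eq',
    Finset.mem_univ, if_true]
  refine Finset.sum_congr rfl fun i _ => Finset.sum_congr rfl fun j _ => ?_
  congr 1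
  rw [Finset.sum_comm]
  simp

lemma aux_posdef_kron_one {m n : Type*} [Fintype m] [Fintype n] [DecidableEq m] [DecidableEq n]
    {A : Matrix m m ℝ} (hA : A.PosDef) : (A ⊗ₖ (1 : Matrix n n ℝ)).PosDef := by
  refine Matrix.PosDef.of_dotProduct_mulVec_pos (aux_kron_isHermitian hA.1 isHermitian_one) fun x hx => ?_
  rw [star_trivial, aux_kron_one_quad]
  obtain ⟨⟨i0, j0⟩, hij⟩ := Function.ne_iff.mp hx
  refine Finset.sum_pos' (fun j _ => hA.posSemidef.dotProduct_mulVec_nonneg _) ⟨j0, Finset.mem_univ _, ?_⟩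
  exact hA.dotProduct_mulVec_pos (Function.ne_iff.mpr ⟨i0, hij⟩)

lemma aux_posdef_one_kron {m n : Type*} [Fintype m] [Fintype n] [DecidableEq m] [DecidableEq n]
    {B : Matrix n n ℝ} (hB : B.PosDef) : ((1 : Matrix m m ℝ) ⊗ₖ B).PosDef := by
  refine Matrix.PosDef.of_dotProduct_mulVec_pos (aux_kron_isHermitian isHermitian_one hB.1) fun x hx => ?_
  rw [star_trivial, aux_one_kron_quad]
  obtain ⟨⟨i0, j0⟩, hij⟩ := Function.ne_iff.mp hx
  refine Finset.sum_pos' (fun i _ => hB.posSemidef.dotProduct_mulVec_nonneg _) ⟨i0, Finset.mem_univ _, ?_⟩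
  exact hB.dotProduct_mulVec_pos (Function.ne_iff.mpr ⟨j0, hij⟩)

lemma aux_diag_nonneg {M : Matrix n n ℝ} (hM : M.PosDef) (i : n) : 0 ≤ M i i := by
  have h := hM.dotProduct_mulVec_pos (x := Pi.single i 1) (by
    intro h
    have := congr_fun h i
    simp at this)
  simpa [dotProduct, mulVec, Pi.single_apply] using h.le

set_option linter.unusedSectionVars false in
lemma aux_smul_one_isHermitian (c : ℝ) : (c • (1 : Matrix n n ℝ)).IsHermitian := by
  rw [smul_one_eq_diagonal]
  exact isHermitian_diagonal _

lemma aux_kronSum_shift {s t : ℕ} (Ω : Matrix (Fin s) (Fin s) ℝ)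
    (Γ : Matrix (Fin t) (Fin t) ℝ) (c : ℝ) :
    ((Ω + c • 1) ⊗ₖ (1 : Matrix (Fin t) (Fin t) ℝ) +
      (1 : Matrix (Fin s) (Fin s) ℝ) ⊗ₖ (Γ - c • 1)) =
    (Ω ⊗ₖ (1 : Matrix (Fin t) (Fin t) ℝ) + (1 : Matrix (Fin s) (Fin s) ℝ) ⊗ₖ Γ) := by
  have h1 : Γ - c • 1 = Γ + (-c) • (1 : Matrix (Fin t) (Fin t) ℝ) := by
    rw [neg_smul, ← sub_eq_add_neg]
  rw [h1, add_kronecker, kronecker_add, smul_kronecker, kronecker_smul, one_kronecker_one]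
  simp only [neg_smul]
  abel

/-- `F₂ = {(Γ,Ω) : Γ ≻ 0, Ω ≻ 0} ⊆ F₃ = {(Γ,Ω) symmetric : Ω ⊕ Γ ≻ 0,
diag(Γ) ≥ 0, diag(Ω) ≥ 0}`, and any objective depending on `(Γ,Ω)` only
through `Ω ⊕ Γ` has the same infimum over `F₂` and `F₃`. -/
theorem stmt17 {s t : ℕ} :
    let F2 : Set (Matrix (Fin t) (Fin t) ℝ × Matrix (Fin s) (Fin s) ℝ) :=
      {p | p.1.PosDef ∧ p.2.PosDef}
    let F3 : Set (Matrix (Fin t) (Fin t) ℝ × Matrix (Fin s) (Fin s) ℝ) :=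
      {p | p.1.IsHermitian ∧ p.2.IsHermitian ∧ (kronSum p.2 p.1).PosDef ∧
        (∀ i, 0 ≤ p.1 i i) ∧ (∀ j, 0 ≤ p.2 j j)}
    F2 ⊆ F3 ∧
      ∀ f : Matrix (Fin t) (Fin t) ℝ × Matrix (Fin s) (Fin s) ℝ → ℝ,
        (∀ p q, kronSum p.2 p.1 = kronSum q.2 q.1 → f p = f q) →
        sInf (f '' F2) = sInf (f '' F3) := by
  intro F2 F3
  have hsub : F2 ⊆ F3 := by
    rintro ⟨Γ, Ω⟩ ⟨hΓ, hΩ⟩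
    exact ⟨hΓ.1, hΩ.1, (aux_posdef_kron_one hΩ).add (aux_posdef_one_kron hΓ),
      fun i => aux_diag_nonneg hΓ i, fun j => aux_diag_nonneg hΩ j⟩
  refine ⟨hsub, fun f hf => ?_⟩
  have himg : f '' F2 = f '' F3 := by
    refine Set.Subset.antisymm (Set.image_mono hsub) ?_
    rintro y ⟨⟨Γ, Ω⟩, ⟨hΓh, hΩh, hK, -, -⟩, rfl⟩
    rcases Nat.eq_zero_or_pos t with ht | ht
    · subst ht
      refine ⟨(Γ, 1), ⟨Matrix.PosDef.of_dotProduct_mulVec_pos ?_ fun x hx => absurd (funext fun (i : Fin 0) => i.elim0) hx,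
        Matrix.PosDef.one⟩, hf _ _ ?_⟩
      · ext i j; exact i.elim0
      · ext ⟨i, j⟩ k; exact j.elim0
    rcases Nat.eq_zero_or_pos s with hs | hs
    · subst hs
      refine ⟨(1, Ω), ⟨Matrix.PosDef.one,
        Matrix.PosDef.of_dotProduct_mulVec_pos ?_ fun x hx => absurd (funext fun (i : Fin 0) => i.elim0) hx⟩, hf _ _ ?_⟩
      · ext i j; exact i.elim0
      · ext ⟨i, j⟩ k; exact i.elim0
    haveI : Nonempty (Fin t) := ⟨⟨0, ht⟩⟩
    haveI : Nonempty (Fin s) := ⟨⟨0, hs⟩⟩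
    set a := Finset.univ.inf' Finset.univ_nonempty hΓh.eigenvalues with ha_def
    set b := Finset.univ.inf' Finset.univ_nonempty hΩh.eigenvalues with hb_def
    have ha_le : ∀ i, a ≤ hΓh.eigenvalues i := fun i => Finset.inf'_le _ (Finset.mem_univ i)
    have hb_le : ∀ i, b ≤ hΩh.eigenvalues i := fun i => Finset.inf'_le _ (Finset.mem_univ i)
    obtain ⟨i0, -, hi0⟩ := Finset.exists_mem_eq_inf' Finset.univ_nonempty hΓh.eigenvalues
    obtain ⟨j0, -, hj0⟩ := Finset.exists_mem_eq_inf' Finset.univ_nonempty hΩh.eigenvalues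
    obtain ⟨w, hw1, hw2⟩ := aux_unit_eigen hΓh i0
    obtain ⟨v, hv1, hv2⟩ := aux_unit_eigen hΩh j0
    have hv0 : v ≠ 0 := fun h => by simp [h] at hv1
    have hw0 : w ≠ 0 := fun h => by simp [h] at hw1
    obtain ⟨i1, hi1⟩ := Function.ne_iff.mp hv0
    obtain ⟨j1, hj1⟩ := Function.ne_iff.mp hw0
    have hx : (fun p : Fin s × Fin t => v p.1 * w p.2) ≠ 0 := by
      intro h0
      have := congr_fun h0 (i1, j1)
      simp only [Pi.zero_apply] at this
      exact (mul_ne_zero hi1 hj1) this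
    have hpos := hK.dotProduct_mulVec_pos hx
    rw [star_trivial] at hpos
    unfold kronSum at hpos
    rw [add_mulVec, dotProduct_add, aux_kron_quad, aux_kron_quad, one_mulVec, one_mulVec,
      hv1, hw1, hv2, hw2, ← hi0, ← hj0] at hpos
    have hab : 0 < a + b := by linarith
    set c := (a - b) / 2 with hc_def
    refine ⟨(Γ - c • 1, Ω + c • 1), ⟨Matrix.PosDef.of_dotProduct_mulVec_pos (hΓh.sub (aux_smul_one_isHermitian c)) fun x hx0 => ?_,
      Matrix.PosDef.of_dotProduct_mulVec_pos (hΩh.add (aux_smul_one_isHermitian c)) fun x hx0 => ?_⟩, hf _ _ ?_⟩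
    · have h1 := aux_rayleigh hΓh ha_le x
      have hxx : 0 < x ⬝ᵥ x := by
        have := dotProduct_star_self_pos_iff (v := x) (R := ℝ)
        rw [star_trivial] at this
        exact this.mpr hx0
      rw [star_trivial, sub_mulVec, dotProduct_sub, smul_mulVec, one_mulVec,
        dotProduct_smul, smul_eq_mul]
      nlinarith
    · have h1 := aux_rayleigh hΩh hb_le x
      have hxx : 0 < x ⬝ᵥ x := by
        have := dotProduct_star_self_pos_iff (v := x) (R := ℝ)
        rw [star_trivial] at this
        exact this.mpr hx0
      rw [star_trivial, add_mulVec, dotProduct_add, smul_mulVec, one_mulVec,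
        dotProduct_smul, smul_eq_mul]
      nlinarith
    · exact aux_kronSum_shift Ω Γ c
  rw [himg]
end
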